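/- Under the graph error model with independent measurement errors and edge unbiasedness λ = |E^c|·α = |E|·β, define the centered, scaled summands ξ_ij = (Y_ij − α)/σ for {i,j} ∈ E^c and ξ_ij = (Y_ij − (1−β))/σ for {i,j} ∈ E, where σ² = α(1−α)|E^c| + β(1−β)|E|. Then Σ_{{i,j}∈V^(2)} E[|ξ_ij|³] ≤ 1 / ( √(2 − (α+β)) · √(α|E^c|) ). -/

import Mathlib

open MeasureTheory ProbabilityTheory Real

/-- The Skellam distribution: law of `X - Y` for `X, Y` independent Poisson random
variables with rates `l1` and `l2`. -/
noncomputable def skellamMeasure (l1 l2 : ℝ) : Measure ℤ :=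
  ((poissonMeasure l1.toNNReal).prod (poissonMeasure l2.toNNReal)).map
    (fun p => (p.1 : ℤ) - (p.2 : ℤ))

/-- Kolmogorov–Smirnov distance between two real random variables on `Ω`. -/
noncomputable def dKS {Ω : Type*} [MeasurableSpace Ω] (μ : Measure Ω) (X Z : Ω → ℝ) : ℝ :=
  ⨆ x : ℝ, |(μ {ω | X ω ≤ x}).toReal - (μ {ω | Z ω ≤ x}).toReal|

/-- Kolmogorov–Smirnov distance between two distributions on `ℤ`. -/
noncomputable def dKSZ (μ1 μ2 : Measure ℤ) : ℝ :=
  ⨆ x : ℝ, |(μ1 {k : ℤ | (k : ℝ) ≤ x}).toReal - (μ2 {k : ℤ | (k : ℝ) ≤ x}).toReal|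

/-- Kolmogorov–Smirnov distance between two distributions on `ℝ`. -/
noncomputable def dKSR (μ1 μ2 : Measure ℝ) : ℝ :=
  ⨆ x : ℝ, |(μ1 {y : ℝ | y ≤ x}).toReal - (μ2 {y : ℝ | y ≤ x}).toReal|

/-- Modified Bessel function of the first kind, of integer order `k`. -/
noncomputable def besselI (k : ℤ) (z : ℝ) : ℝ :=
  ∑' j : ℕ, (z / 2) ^ (2 * j + k.natAbs) /
    ((Nat.factorial j : ℝ) * (Nat.factorial (j + k.natAbs) : ℝ))

lemma bern_abs_cube {Ω : Type*} [MeasurableSpace Ω] (μ : Measure Ω) [IsProbabilityMeasure μ]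
    (X : Ω → ℤ) (hm : Measurable X) (h01 : ∀ ω, X ω = 0 ∨ X ω = 1) (m : ℝ) :
    ∫ ω, |(X ω : ℝ) - m| ^ 3 ∂μ
      = |1 - m| ^ 3 * (μ {ω | X ω = 1}).toReal
        + |m| ^ 3 * (1 - (μ {ω | X ω = 1}).toReal) := by
  set A : Set Ω := {ω | X ω = 1} with hAdef
  have hA : MeasurableSet A := hm (measurableSet_singleton 1)
  have hfun : (fun ω => |(X ω : ℝ) - m| ^ 3)
      = (fun ω => A.indicator (fun _ => |1 - m| ^ 3) ω + Aᶜ.indicator (fun _ => |m| ^ 3) ω) := by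
    funext ω
    rcases h01 ω with h | h
    · have hω : ω ∉ A := by simp [hAdef, h]
      simp [Set.indicator_of_notMem hω, Set.indicator_of_mem (Set.mem_compl hω), h,
        abs_neg]
    · have hω : ω ∈ A := by simp [hAdef, h]
      simp [Set.indicator_of_mem hω, Set.indicator_of_notMem (by simp [hω] : ω ∉ Aᶜ), h]
  have hcompl : (μ Aᶜ).toReal = 1 - (μ A).toReal := by
    have h1 : μ Aᶜ = 1 - μ A := prob_compl_eq_one_sub hA
    rw [h1, ENNReal.toReal_sub_of_le prob_le_one ENNReal.one_ne_top, ENNReal.toReal_one]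
  rw [hfun, integral_add ((integrable_const _).indicator hA)
      ((integrable_const _).indicator hA.compl),
    integral_indicator_const _ hA, integral_indicator_const _ hA.compl, measureReal_def, measureReal_def, hcompl]
  simp only [smul_eq_mul]
  ring

/-- Under the graph error model with independent errors and edge
unbiasedness, the centered scaled summands `ξ_ij` satisfy
`Σ_{{i,j}∈V^(2)} E[|ξ_ij|³] ≤ 1/(√(2−(α+β))·√(α|Eᶜ|))`. -/
theorem stmt_9 {Ω V : Type*} [MeasurableSpace Ω] (μ : Measure Ω) [IsProbabilityMeasure μ]
    [Fintype V] [DecidableEq V]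
    (G : SimpleGraph V) [DecidableRel G.Adj]
    (hE : 1 ≤ G.edgeFinset.card) (hEc : 1 ≤ Gᶜ.edgeFinset.card)
    (Y : Sym2 V → Ω → ℤ)
    (hmeas : ∀ e, Measurable (Y e))
    (h01 : ∀ e ω, Y e ω = 0 ∨ Y e ω = 1)
    (hindep : iIndepFun
      (fun e : {e : Sym2 V // ¬ e.IsDiag} => Y e.1) μ)
    (α β : ℝ) (hα : α ∈ Set.Ioo (0 : ℝ) 1) (hβ : β ∈ Set.Ioo (0 : ℝ) 1)
    (hYα : ∀ e ∈ Gᶜ.edgeFinset, (μ {ω | Y e ω = 1}).toReal = α)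
    (hYβ : ∀ e ∈ G.edgeFinset, (μ {ω | Y e ω = 1}).toReal = 1 - β)
    (lam : ℝ)
    (hlam1 : lam = (Gᶜ.edgeFinset.card : ℝ) * α)
    (hlam2 : lam = (G.edgeFinset.card : ℝ) * β)
    (σ : ℝ)
    (hσ : σ = Real.sqrt (α * (1 - α) * (Gᶜ.edgeFinset.card : ℝ)
      + β * (1 - β) * (G.edgeFinset.card : ℝ))) :
    (∑ e ∈ Gᶜ.edgeFinset, ∫ ω, |((Y e ω : ℝ) - α) / σ| ^ 3 ∂μ)
      + (∑ e ∈ G.edgeFinset, ∫ ω, |((Y e ω : ℝ) - (1 - β)) / σ| ^ 3 ∂μ) ≤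
      1 / (Real.sqrt (2 - (α + β)) * Real.sqrt (α * (Gᶜ.edgeFinset.card : ℝ))) := by
  obtain ⟨hα0, hα1⟩ := hα
  obtain ⟨hβ0, hβ1⟩ := hβ
  set cEc : ℝ := (Gᶜ.edgeFinset.card : ℝ) with hcEc
  set cE : ℝ := (G.edgeFinset.card : ℝ) with hcE
  have hcEc1 : (1 : ℝ) ≤ cEc := by rw [hcEc]; exact_mod_cast hEc
  have hcE1 : (1 : ℝ) ≤ cE := by rw [hcE]; exact_mod_cast hE
  set s : ℝ := α * (1 - α) * cEc + β * (1 - β) * cE with hs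
  have hs_pos : 0 < s := by
    have h1 : 0 < α * (1 - α) * cEc :=
      mul_pos (mul_pos hα0 (by linarith)) (by linarith)
    have h2 : 0 ≤ β * (1 - β) * cE :=
      le_of_lt (mul_pos (mul_pos hβ0 (by linarith)) (by linarith))
    linarith
  have hσ_pos : 0 < σ := hσ ▸ Real.sqrt_pos.mpr hs_pos
  have hσ_sq : σ ^ 2 = s := hσ ▸ Real.sq_sqrt hs_pos.le
  -- rewrite each integral
  have hint : ∀ (e : Sym2 V) (m : ℝ), (∫ ω, |((Y e ω : ℝ) - m) / σ| ^ 3 ∂μ)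
      = (|1 - m| ^ 3 * (μ {ω | Y e ω = 1}).toReal
        + |m| ^ 3 * (1 - (μ {ω | Y e ω = 1}).toReal)) / σ ^ 3 := by
    intro e m
    have heq : ∀ ω, |((Y e ω : ℝ) - m) / σ| ^ 3 = |(Y e ω : ℝ) - m| ^ 3 / σ ^ 3 := by
      intro ω
      rw [abs_div, div_pow, abs_of_pos hσ_pos]
    simp only [heq]
    rw [integral_div, bern_abs_cube μ (Y e) (hmeas e) (h01 e)]
  have hbound1 : ∀ e ∈ Gᶜ.edgeFinset,
      (∫ ω, |((Y e ω : ℝ) - α) / σ| ^ 3 ∂μ) ≤ α * (1 - α) / σ ^ 3 := by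
    intro e he
    rw [hint e α, hYα e he]
    apply div_le_div_of_nonneg_right ?_ (by positivity)
    rw [abs_of_pos (by linarith : (0:ℝ) < 1 - α), abs_of_pos hα0]
    nlinarith [mul_pos hα0 (by linarith : (0:ℝ) < 1 - α)]
  have hbound2 : ∀ e ∈ G.edgeFinset,
      (∫ ω, |((Y e ω : ℝ) - (1 - β)) / σ| ^ 3 ∂μ) ≤ β * (1 - β) / σ ^ 3 := by
    intro e he
    rw [hint e (1 - β), hYβ e he]
    apply div_le_div_of_nonneg_right ?_ (by positivity)
    rw [(by ring : (1:ℝ) - (1 - β) = β), abs_of_pos hβ0,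
      abs_of_pos (by linarith : (0:ℝ) < 1 - β)]
    nlinarith [mul_pos hβ0 (by linarith : (0:ℝ) < 1 - β)]
  have hsum : (∑ e ∈ Gᶜ.edgeFinset, ∫ ω, |((Y e ω : ℝ) - α) / σ| ^ 3 ∂μ)
      + (∑ e ∈ G.edgeFinset, ∫ ω, |((Y e ω : ℝ) - (1 - β)) / σ| ^ 3 ∂μ)
      ≤ cEc * (α * (1 - α) / σ ^ 3) + cE * (β * (1 - β) / σ ^ 3) := by
    refine add_le_add ?_ ?_
    · calc _ ≤ ∑ _e ∈ Gᶜ.edgeFinset, α * (1 - α) / σ ^ 3 := Finset.sum_le_sum hbound1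
        _ = cEc * (α * (1 - α) / σ ^ 3) := by rw [Finset.sum_const, nsmul_eq_mul]
    · calc _ ≤ ∑ _e ∈ G.edgeFinset, β * (1 - β) / σ ^ 3 := Finset.sum_le_sum hbound2
        _ = cE * (β * (1 - β) / σ ^ 3) := by rw [Finset.sum_const, nsmul_eq_mul]
  have hrhs : cEc * (α * (1 - α) / σ ^ 3) + cE * (β * (1 - β) / σ ^ 3) = 1 / σ := by
    have h3 : σ ^ 3 = s * σ := by rw [← hσ_sq]; ring
    have h4 : cEc * (α * (1 - α) / (s * σ)) + cE * (β * (1 - β) / (s * σ))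
        = (α * (1 - α) * cEc + β * (1 - β) * cE) / (s * σ) := by ring
    rw [h3, h4, ← hs, div_mul_eq_div_div, div_self hs_pos.ne']
  rw [hrhs] at hsum
  -- now show 1/σ = RHS
  have hβE : β * cE = α * cEc := by
    have := hlam1.symm.trans hlam2
    linarith [this]
  have hseq : s = (α * cEc) * (2 - (α + β)) := by
    have h1 : β * (1 - β) * cE = α * cEc * (1 - β) := by nlinarith [hβE]
    rw [hs, h1]; ring
  have hσeq : σ = Real.sqrt (2 - (α + β)) * Real.sqrt (α * cEc) := by
    rw [hσ, hseq, mul_comm (α * cEc), Real.sqrt_mul (by linarith : (0:ℝ) ≤ 2 - (α + β))]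
  rw [← hσeq]
  exact hsum
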